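/- arXiv:2602.01209 — 2 statements merged into one kernel-verified Lean document; each statement's English description precedes it below -/
import Mathlib

section
/- Let (C̄, s, d) be a feasible demand-quasi-extreme scenario with free index k (i.e., d_j in {d̲_j, d̄_j} for j != k, s_i in {s̲_i, s̄_i} for all i). Define d'_k = min{ d̄_k, sum_i s_i - sum_{j != k} d_j } and d'_j = d_j for j != k. Then (s, d') is feasible and f(C̄, s, d) <= f(C̄, s, d'), assuming C̄ >= 0. -/
open Finset

/-- A feasible transportation plan for supplies `s` and demands `d`. -/
def IsPlan {m n : ℕ} (s : Fin m → ℝ) (d : Fin n → ℝ) (x : Fin m → Fin n → ℝ) : Prop :=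
  (∀ i j, 0 ≤ x i j) ∧ (∀ i, ∑ j, x i j ≤ s i) ∧ (∀ j, ∑ i, x i j = d j)

/-- Total transportation cost of a plan `x` under cost matrix `C`. -/
def cost {m n : ℕ} (C x : Fin m → Fin n → ℝ) : ℝ :=
  ∑ i, ∑ j, C i j * x i j

/-- Optimal value of the transportation problem with data `(C, s, d)`. -/
noncomputable def optVal {m n : ℕ} (C : Fin m → Fin n → ℝ) (s : Fin m → ℝ)
    (d : Fin n → ℝ) : ℝ :=
  sInf (cost C '' {x | IsPlan s d x})

lemma cost_nonneg {m n : ℕ} {C x : Fin m → Fin n → ℝ} (hC : ∀ i j, 0 ≤ C i j)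
    (hx : ∀ i j, 0 ≤ x i j) : 0 ≤ cost C x :=
  Finset.sum_nonneg fun i _ => Finset.sum_nonneg fun j _ => mul_nonneg (hC i j) (hx i j)

lemma plan_exists {m n : ℕ} {s : Fin m → ℝ} {d : Fin n → ℝ}
    (hs : ∀ i, 0 ≤ s i) (hd : ∀ j, 0 ≤ d j) (h : ∑ j, d j ≤ ∑ i, s i) :
    ∃ x, IsPlan s d x := by
  by_cases hS : ∑ i, s i = 0
  · have hd0 : ∀ j, d j = 0 := by
      have hsum : ∑ j, d j = 0 :=
        le_antisymm (hS ▸ h) (Finset.sum_nonneg fun j _ => hd j)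
      intro j
      exact (Finset.sum_eq_zero_iff_of_nonneg (fun j _ => hd j)).mp hsum j (mem_univ j)
    exact ⟨0, fun i j => le_refl 0, fun i => by simp [hs i], fun j => by simp [hd0 j]⟩
  · have hSpos : 0 < ∑ i, s i :=
      lt_of_le_of_ne (Finset.sum_nonneg fun i _ => hs i) (Ne.symm hS)
    refine ⟨fun i j => s i * d j / ∑ i', s i', fun i j => div_nonneg (mul_nonneg (hs i) (hd j)) hSpos.le, fun i => ?_, fun j => ?_⟩
    · have h1 : ∑ j, s i * d j / ∑ i', s i' = s i * (∑ j, d j) / ∑ i', s i' := by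
        rw [Finset.mul_sum, Finset.sum_div]
      rw [h1, div_le_iff₀ hSpos]
      exact mul_le_mul_of_nonneg_left h (hs i)
    · rw [← Finset.sum_div, ← Finset.sum_mul, mul_comm, mul_div_assoc,
        div_self hS, mul_one]

lemma plan_scale {m n : ℕ} {C : Fin m → Fin n → ℝ} {s : Fin m → ℝ} {d d' : Fin n → ℝ}
    {x' : Fin m → Fin n → ℝ} (hC : ∀ i j, 0 ≤ C i j) (hd : ∀ j, 0 ≤ d j)
    (hdd : ∀ j, d j ≤ d' j) (hx' : IsPlan s d' x') :
    ∃ x, IsPlan s d x ∧ cost C x ≤ cost C x' := by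
  obtain ⟨hpos, hrow, hcol⟩ := hx'
  set r : Fin n → ℝ := fun j => if d' j = 0 then 0 else d j / d' j with hr
  have hd'nn : ∀ j, 0 ≤ d' j := fun j => (hd j).trans (hdd j)
  have hr0 : ∀ j, 0 ≤ r j := by
    intro j; simp only [hr]
    split
    · exact le_refl 0
    · exact div_nonneg (hd j) (hd'nn j)
  have hr1 : ∀ j, r j ≤ 1 := by
    intro j; simp only [hr]
    split
    · exact zero_le_one
    · rename_i h
      exact div_le_one_of_le₀ (hdd j) (hd'nn j)
  have hrd : ∀ j, r j * d' j = d j := by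
    intro j; simp only [hr]
    split
    · rename_i h
      have : d j = 0 := le_antisymm (h ▸ hdd j) (hd j)
      rw [this, zero_mul]
    · rename_i h
      field_simp
  refine ⟨fun i j => r j * x' i j, ⟨fun i j => mul_nonneg (hr0 j) (hpos i j), fun i => ?_, fun j => ?_⟩, ?_⟩
  · calc ∑ j, r j * x' i j ≤ ∑ j, x' i j :=
          Finset.sum_le_sum fun j _ =>
            mul_le_of_le_one_left (hpos i j) (hr1 j)
      _ ≤ s i := hrow i
  · rw [← Finset.mul_sum, hcol j, hrd j]
  · unfold cost
    refine Finset.sum_le_sum fun i _ => Finset.sum_le_sum fun j _ => ?_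
    exact mul_le_mul_of_nonneg_left (mul_le_of_le_one_left (hpos i j) (hr1 j)) (hC i j)

/-- For a feasible demand-quasi-extreme scenario with free index `k`, replacing the
free demand by `min (d̄ k) (∑ s - ∑_{j ≠ k} d j)` keeps the scenario feasible and
weakly increases the optimal value (assuming non-negative costs). -/
theorem demand_quasi_extreme_fix_free {m n : ℕ} (Cb : Fin m → Fin n → ℝ)
    (sl su s : Fin m → ℝ) (dl du d : Fin n → ℝ) (k : Fin n)
    (hCb : ∀ i j, 0 ≤ Cb i j)
    (hsl : ∀ i, 0 ≤ sl i) (hdl : ∀ j, 0 ≤ dl j)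
    (hsb : ∀ i, sl i ≤ s i ∧ s i ≤ su i)
    (hdb : ∀ j, dl j ≤ d j ∧ d j ≤ du j)
    (hqe : ∀ j, j ≠ k → d j = dl j ∨ d j = du j)
    (hqes : ∀ i, s i = sl i ∨ s i = su i)
    (hfeas : ∑ j, d j ≤ ∑ i, s i) :
    let d' := Function.update d k
      (min (du k) (∑ i, s i - ∑ j ∈ Finset.univ.erase k, d j))
    (∀ j, dl j ≤ d' j ∧ d' j ≤ du j) ∧ ∑ j, d' j ≤ ∑ i, s i ∧
      optVal Cb s d ≤ optVal Cb s d' := by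
  intro d'
  have hsum : ∑ j ∈ Finset.univ.erase k, d j + d k = ∑ j, d j :=
    Finset.sum_erase_add _ _ (mem_univ k)
  have hdkT : d k ≤ ∑ i, s i - ∑ j ∈ Finset.univ.erase k, d j := by linarith
  have hd'k : d' k = min (du k) (∑ i, s i - ∑ j ∈ Finset.univ.erase k, d j) :=
    Function.update_self _ _ _
  have hd'ne : ∀ j, j ≠ k → d' j = d j := fun j hj => Function.update_of_ne hj _ _
  have part1 : ∀ j, dl j ≤ d' j ∧ d' j ≤ du j := by
    intro j
    by_cases hj : j = k
    · subst hj
      rw [hd'k]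
      exact ⟨le_min ((hdb j).1.trans (hdb j).2) ((hdb j).1.trans hdkT), min_le_left _ _⟩
    · rw [hd'ne j hj]; exact hdb j
  have hdd' : ∀ j, d j ≤ d' j := by
    intro j
    by_cases hj : j = k
    · subst hj; rw [hd'k]; exact le_min (hdb j).2 hdkT
    · rw [hd'ne j hj]
  have hsum' : ∑ j ∈ Finset.univ.erase k, d' j + d' k = ∑ j, d' j :=
    Finset.sum_erase_add _ _ (mem_univ k)
  have herase : ∑ j ∈ Finset.univ.erase k, d' j = ∑ j ∈ Finset.univ.erase k, d j :=
    Finset.sum_congr rfl fun j hj => hd'ne j (Finset.ne_of_mem_erase hj)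
  have part2 : ∑ j, d' j ≤ ∑ i, s i := by
    have hmin : d' k ≤ ∑ i, s i - ∑ j ∈ Finset.univ.erase k, d j := hd'k ▸ min_le_right _ _
    linarith [hsum', herase]
  refine ⟨part1, part2, ?_⟩
  have hdnn : ∀ j, 0 ≤ d j := fun j => (hdl j).trans (hdb j).1
  have hd'nn : ∀ j, 0 ≤ d' j := fun j => (hdl j).trans (part1 j).1
  have hsnn : ∀ i, 0 ≤ s i := fun i => (hsl i).trans (hsb i).1
  obtain ⟨x0, hx0⟩ := plan_exists hsnn hd'nn part2
  have hbdd : BddBelow (cost Cb '' {x | IsPlan s d x}) := by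
    refine ⟨0, ?_⟩
    rintro y ⟨x, hx, rfl⟩
    exact cost_nonneg hCb hx.1
  unfold optVal
  refine le_csInf ⟨cost Cb x0, ⟨x0, hx0, rfl⟩⟩ ?_
  rintro y ⟨x', hx', rfl⟩
  obtain ⟨x, hx, hc⟩ := plan_scale hCb hdnn hdd' hx'
  exact le_trans (csInf_le hbdd ⟨x, hx, rfl⟩) hc
end

section
/- Suppose there exists an infeasible scenario of the interval transportation problem, i.e., sum_i s̲_i < sum_j d̄_j. Let (C̄, s, d) be a feasible supply-quasi-extreme scenario with free index k satisfying s̲_k > sum_j d_j - sum_{i != k} s_i. Then there exists a balanced feasible quasi-extreme scenario (C̄, s', d'), with sum_i s'_i = sum_j d'_j, such that f(C̄, s, d) <= f(C̄, s', d'). -/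
open Finset

/-- A supply-demand vector is quasi-extreme if all its coordinates except at most
one (a supply coordinate, or a demand coordinate) lie at the interval endpoints. -/
def QuasiExtreme {m n : ℕ} (sl su s : Fin m → ℝ) (dl du : Fin n → ℝ)
    (d : Fin n → ℝ) : Prop :=
  (∃ k : Fin m, (∀ i, i ≠ k → s i = sl i ∨ s i = su i) ∧
      (∀ j, d j = dl j ∨ d j = du j)) ∨
  (∃ k : Fin n, (∀ j, j ≠ k → d j = dl j ∨ d j = du j) ∧
      (∀ i, s i = sl i ∨ s i = su i))

lemma fill_lemma {ι : Type*} [DecidableEq ι] [Nonempty ι] (l v : ι → ℝ) (A : Finset ι) :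
    (∀ i ∈ A, l i ≤ v i) → ∀ T : ℝ, (∑ i ∈ A, l i) ≤ T → T ≤ ∑ i ∈ A, v i →
    ∃ (w : ι → ℝ) (k : ι), (∀ i ∈ A, l i ≤ w i ∧ w i ≤ v i) ∧ (∑ i ∈ A, w i) = T ∧
      (∀ i ∈ A, i ≠ k → w i = l i ∨ w i = v i) := by
  induction A using Finset.induction_on with
  | empty =>
    intro _ T h1 h2
    simp only [Finset.sum_empty] at h1 h2
    exact ⟨l, Classical.arbitrary ι, by simp, by simp; linarith, by simp⟩
  | @insert a B ha ih =>
    intro hlv T h1 h2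
    rw [Finset.sum_insert ha] at h1 h2
    by_cases hc : T ≤ l a + ∑ i ∈ B, v i
    · obtain ⟨w, k, hw1, hw2, hw3⟩ := ih (fun i hi => hlv i (Finset.mem_insert_of_mem hi))
        (T - l a) (by linarith) (by linarith)
      refine ⟨Function.update w a (l a), k, ?_, ?_, ?_⟩
      · intro i hi
        rcases Finset.mem_insert.mp hi with rfl | hi
        · rw [Function.update_self]
          exact ⟨le_refl _, hlv i (Finset.mem_insert_self i B)⟩
        · rw [Function.update_of_ne (ne_of_mem_of_not_mem hi ha)]
          exact hw1 i hi
      · rw [Finset.sum_insert ha, Function.update_self, Finset.sum_update_of_notMem ha]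
        linarith
      · intro i hi hik
        rcases Finset.mem_insert.mp hi with rfl | hi
        · left; simp
        · rw [Function.update_of_ne (ne_of_mem_of_not_mem hi ha)]
          exact hw3 i hi hik
    · push_neg at hc
      refine ⟨Function.update v a (T - ∑ i ∈ B, v i), a, ?_, ?_, ?_⟩
      · intro i hi
        rcases Finset.mem_insert.mp hi with rfl | hi
        · rw [Function.update_self]
          constructor <;> linarith
        · rw [Function.update_of_ne (ne_of_mem_of_not_mem hi ha)]
          exact ⟨hlv i (Finset.mem_insert_of_mem hi), le_refl _⟩
      · rw [Finset.sum_insert ha, Function.update_self, Finset.sum_update_of_notMem ha]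
        ring
      · intro i hi hik
        rcases Finset.mem_insert.mp hi with rfl | hi
        · exact absurd rfl hik
        · right; rw [Function.update_of_ne (ne_of_mem_of_not_mem hi ha)]

lemma exists_plan {m n : ℕ} (s : Fin m → ℝ) (d : Fin n → ℝ)
    (hs : ∀ i, 0 ≤ s i) (hd : ∀ j, 0 ≤ d j) (hbal : ∑ j, d j ≤ ∑ i, s i) :
    ∃ x, IsPlan s d x := by
  have hS0 : (0:ℝ) ≤ ∑ i, s i := Finset.sum_nonneg fun i _ => hs i
  refine ⟨fun i j => s i * d j / (∑ i, s i), ?_, ?_, ?_⟩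
  · intro i j
    exact div_nonneg (mul_nonneg (hs i) (hd j)) hS0
  · intro i
    rw [← Finset.sum_div, ← Finset.mul_sum]
    rcases eq_or_lt_of_le hS0 with h | h
    · rw [← h, div_zero]; exact hs i
    · rw [div_le_iff₀ h]
      exact mul_le_mul_of_nonneg_left hbal (hs i)
  · intro j
    rw [← Finset.sum_div, ← Finset.sum_mul]
    rcases eq_or_lt_of_le hS0 with h | h
    · rw [← h, zero_mul, zero_div]
      have hall := (Finset.sum_eq_zero_iff_of_nonneg (fun j' (_ : j' ∈ Finset.univ) => hd j')).mp
          (le_antisymm (h ▸ hbal) (Finset.sum_nonneg fun j' _ => hd j'))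
      exact (hall j (Finset.mem_univ j)).symm
    · field_simp

lemma optVal_mono {m n : ℕ} (C : Fin m → Fin n → ℝ) (hC : ∀ i j, 0 ≤ C i j)
    (s s' : Fin m → ℝ) (d d' : Fin n → ℝ)
    (hs : ∀ i, s' i ≤ s i) (hd0 : ∀ j, 0 ≤ d j) (hd : ∀ j, d j ≤ d' j)
    (hne : ∃ x, IsPlan s' d' x) :
    optVal C s d ≤ optVal C s' d' := by
  obtain ⟨x0, hx0⟩ := hne
  unfold optVal
  have hne' : (cost C '' {x | IsPlan s' d' x}).Nonempty := ⟨cost C x0, ⟨x0, hx0, rfl⟩⟩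
  apply le_csInf hne'
  rintro b ⟨x', hx', rfl⟩
  obtain ⟨hx'0, hx'r, hx'c⟩ := hx'
  have hrat : ∀ j, 0 ≤ d j / d' j ∧ d j / d' j ≤ 1 := by
    intro j
    by_cases h : d' j = 0
    · simp [h]
    · have hpos : 0 < d' j := lt_of_le_of_ne (le_trans (hd0 j) (hd j)) (Ne.symm h)
      exact ⟨div_nonneg (hd0 j) hpos.le, (div_le_one hpos).mpr (hd j)⟩
  set x : Fin m → Fin n → ℝ := fun i j => x' i j * (d j / d' j) with hxdef
  have hxle : ∀ i j, x i j ≤ x' i j := fun i j => by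
    calc x i j = x' i j * (d j / d' j) := rfl
      _ ≤ x' i j * 1 := mul_le_mul_of_nonneg_left (hrat j).2 (hx'0 i j)
      _ = x' i j := mul_one _
  have hplan : IsPlan s d x := by
    refine ⟨fun i j => mul_nonneg (hx'0 i j) (hrat j).1, fun i => ?_, fun j => ?_⟩
    · exact le_trans (Finset.sum_le_sum fun j _ => hxle i j) (le_trans (hx'r i) (hs i))
    · have hcol : ∑ i, x i j = (∑ i, x' i j) * (d j / d' j) := by
        rw [Finset.sum_mul]
      rw [hcol, hx'c j]
      by_cases h : d' j = 0
      · have hdz : d j = 0 := le_antisymm (h ▸ hd j) (hd0 j)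
        simp [h, hdz]
      · field_simp
  have hbdd : BddBelow (cost C '' {x | IsPlan s d x}) := by
    refine ⟨0, ?_⟩
    rintro r ⟨y, hy, rfl⟩
    exact Finset.sum_nonneg fun i _ => Finset.sum_nonneg fun j _ =>
      mul_nonneg (hC i j) (hy.1 i j)
  refine csInf_le_of_le hbdd ⟨x, hplan, rfl⟩ ?_
  unfold cost
  exact Finset.sum_le_sum fun i _ => Finset.sum_le_sum fun j _ =>
    mul_le_mul_of_nonneg_left (hxle i j) (hC i j)

/-- Theorem 3 (supply case): a feasible supply-quasi-extreme scenario whose free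
supply cannot reach balance from below is dominated by a balanced feasible
quasi-extreme scenario. -/
theorem balanced_dominates_supply_case {m n : ℕ} (Cb : Fin m → Fin n → ℝ)
    (sl su s : Fin m → ℝ) (dl du d : Fin n → ℝ) (k : Fin m)
    (hCb : ∀ i j, 0 ≤ Cb i j)
    (hsl : ∀ i, 0 ≤ sl i) (hdl : ∀ j, 0 ≤ dl j)
    (hslsu : ∀ i, sl i ≤ su i) (hdldu : ∀ j, dl j ≤ du j)
    (hinfeas : ∑ i, sl i < ∑ j, du j)
    (hsb : ∀ i, sl i ≤ s i ∧ s i ≤ su i)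
    (hdb : ∀ j, dl j ≤ d j ∧ d j ≤ du j)
    (hqe : ∀ i, i ≠ k → s i = sl i ∨ s i = su i)
    (hqed : ∀ j, d j = dl j ∨ d j = du j)
    (hfeas : ∑ j, d j ≤ ∑ i, s i)
    (hk : ∑ j, d j - ∑ i ∈ Finset.univ.erase k, s i < sl k) :
    ∃ (s' : Fin m → ℝ) (d' : Fin n → ℝ),
      (∀ i, sl i ≤ s' i ∧ s' i ≤ su i) ∧ (∀ j, dl j ≤ d' j ∧ d' j ≤ du j) ∧
      QuasiExtreme sl su s' dl du d' ∧ ∑ i, s' i = ∑ j, d' j ∧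
      optVal Cb s d ≤ optVal Cb s' d' := by
  haveI : Nonempty (Fin m) := ⟨k⟩
  haveI hn : Nonempty (Fin n) := by
    rcases Nat.eq_zero_or_pos n with h | h
    · subst h
      simp only [Finset.univ_eq_empty, Finset.sum_empty] at hinfeas
      exact absurd hinfeas (not_lt.mpr (Finset.sum_nonneg fun i _ => hsl i))
    · exact ⟨⟨0, h⟩⟩
  have hd0 : ∀ j, 0 ≤ d j := fun j => le_trans (hdl j) (hdb j).1
  by_cases hcase : ∑ j, d j ≤ ∑ i, sl i
  · -- target T = ∑ sl : set supplies to sl, raise demands toward du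
    obtain ⟨d', kd, hd1, hd2, hd3⟩ := fill_lemma d du Finset.univ
      (fun j _ => (hdb j).2) (∑ i, sl i) hcase (le_of_lt hinfeas)
    refine ⟨sl, d', fun i => ⟨le_refl _, hslsu i⟩, ?_, ?_, hd2.symm, ?_⟩
    · intro j
      exact ⟨le_trans (hdb j).1 (hd1 j (Finset.mem_univ j)).1, (hd1 j (Finset.mem_univ j)).2⟩
    · right
      refine ⟨kd, fun j hjk => ?_, fun i => Or.inl rfl⟩
      rcases hd3 j (Finset.mem_univ j) hjk with h | h
      · rw [h]; exact hqed j
      · right; exact h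
    · apply optVal_mono Cb hCb s sl d d' (fun i => (hsb i).1) hd0
        (fun j => (hd1 j (Finset.mem_univ j)).1)
      exact exists_plan sl d' hsl (fun j => le_trans (hd0 j) (hd1 j (Finset.mem_univ j)).1)
        (le_of_eq hd2)
  · push_neg at hcase
    set sv : Fin m → ℝ := Function.update s k (sl k) with hsv
    have hsvk : sv k = sl k := Function.update_self k (sl k) s
    have hsvne : ∀ i, i ≠ k → sv i = s i := fun i hi => Function.update_of_ne hi (sl k) s
    have hsvle : ∀ i, sv i ≤ s i := by
      intro i
      by_cases h : i = k
      · subst h; rw [hsvk]; exact (hsb i).1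
      · rw [hsvne i h]
    have hsvsum : ∑ i, sv i = sl k + ∑ i ∈ Finset.univ.erase k, s i := by
      rw [← Finset.add_sum_erase _ sv (Finset.mem_univ k), hsvk]
      congr 1
      exact Finset.sum_congr rfl fun i hi => hsvne i (Finset.ne_of_mem_erase hi)
    have key : ∑ j, d j ≤ ∑ i, sv i := by rw [hsvsum]; linarith
    obtain ⟨s', ks, hs1, hs2, hs3⟩ := fill_lemma sl sv Finset.univ
      (fun i _ => by
        by_cases h : i = k
        · subst h; rw [hsvk]
        · rw [hsvne i h]; exact (hsb i).1)
      (∑ j, d j) (le_of_lt hcase) key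
    refine ⟨s', d, ?_, hdb, ?_, ?_, ?_⟩
    · intro i
      refine ⟨(hs1 i (Finset.mem_univ i)).1, le_trans (hs1 i (Finset.mem_univ i)).2
        (le_trans (hsvle i) (hsb i).2)⟩
    · left
      refine ⟨ks, fun i hik => ?_, hqed⟩
      rcases hs3 i (Finset.mem_univ i) hik with h | h
      · left; exact h
      · by_cases hik' : i = k
        · subst hik'; left; rw [h, hsvk]
        · rw [h, hsvne i hik']; exact hqe i hik'
    · exact hs2
    · apply optVal_mono Cb hCb s s' d d
        (fun i => le_trans (hs1 i (Finset.mem_univ i)).2 (hsvle i)) hd0 (fun j => le_refl _)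
      exact exists_plan s' d (fun i => le_trans (hsl i) (hs1 i (Finset.mem_univ i)).1) hd0
        (le_of_eq hs2.symm)
end
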